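/- Let F(T,Y) = ∫₀^{ℏω_D} tanh(√(ξ²+Y)/(2k_B T))/√(ξ²+Y) dξ − 1/(U₀N₀) for T > 0, Y ≥ 0. Then for fixed Y ≥ 0 (with Y > 0 if needed), the function T ↦ F(T,Y) is strictly decreasing on (0,∞), i.e., its partial derivative in T equals −(1/(2k_B T²))∫₀^{ℏω_D} dξ/cosh²(√(ξ²+Y)/(2k_B T)) < 0. -/

import Mathlib

open Real intervalIntegral MeasureTheory Set Metric

lemma my_hasDerivAt_tanh (x : ℝ) : HasDerivAt Real.tanh (1 / Real.cosh x ^ 2) x := by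
  have h := (Real.hasDerivAt_sinh x).div (Real.hasDerivAt_cosh x) (Real.cosh_pos x).ne'
  have hfun : Real.tanh = fun x => Real.sinh x / Real.cosh x :=
    funext Real.tanh_eq_sinh_div_cosh
  rw [hfun]
  refine HasDerivAt.congr_deriv h ?_
  have h1 := Real.cosh_sq_sub_sinh_sq x
  have : Real.cosh x * Real.cosh x - Real.sinh x * Real.sinh x = 1 := by nlinarith
  rw [this]

lemma my_continuous_tanh : Continuous Real.tanh :=
  (Differentiable.continuous fun x => (my_hasDerivAt_tanh x).differentiableAt)

lemma my_tanh_nonneg {x : ℝ} (hx : 0 ≤ x) : 0 ≤ Real.tanh x := by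
  rw [Real.tanh_eq_sinh_div_cosh]
  exact div_nonneg (Real.sinh_nonneg_iff.2 hx) (Real.cosh_pos x).le

lemma my_tanh_le {x : ℝ} (hx : 0 ≤ x) : Real.tanh x ≤ x := by
  have hm : Monotone (fun x : ℝ => x - Real.tanh x) := by
    apply monotone_of_deriv_nonneg
    · exact fun x => ((hasDerivAt_id' x).sub (my_hasDerivAt_tanh x)).differentiableAt
    · intro x
      rw [(show HasDerivAt (fun x => x - Real.tanh x) (1 - 1 / Real.cosh x ^ 2) x from (hasDerivAt_id' x).sub (my_hasDerivAt_tanh x)).deriv]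
      have h1 : (1:ℝ) ≤ Real.cosh x ^ 2 := by nlinarith [Real.one_le_cosh x]
      have h2 : 1 / Real.cosh x ^ 2 ≤ 1 := by
        rw [div_le_one (by positivity)]; exact h1
      linarith
  have := hm hx
  simp only [Real.tanh_zero, sub_zero] at this
  linarith

theorem F_strictAnti_in_T (kB ω U₀ N₀ : ℝ) (hkB : 0 < kB) (hω : 0 < ω)
    (hU : 0 < U₀) (hN : 0 < N₀) (Y : ℝ) (hY : 0 ≤ Y) :
    StrictAntiOn
      (fun T : ℝ => (∫ ξ in (0:ℝ)..ω,
        Real.tanh (Real.sqrt (ξ^2 + Y) / (2 * kB * T)) / Real.sqrt (ξ^2 + Y))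
        - 1 / (U₀ * N₀)) (Set.Ioi 0) ∧
    ∀ T : ℝ, 0 < T →
      HasDerivAt
        (fun T : ℝ => (∫ ξ in (0:ℝ)..ω,
          Real.tanh (Real.sqrt (ξ^2 + Y) / (2 * kB * T)) / Real.sqrt (ξ^2 + Y))
          - 1 / (U₀ * N₀))
        (-(1 / (2 * kB * T^2)) *
          ∫ ξ in (0:ℝ)..ω, 1 / (Real.cosh (Real.sqrt (ξ^2 + Y) / (2 * kB * T)))^2) T ∧
      -(1 / (2 * kB * T^2)) *
          (∫ ξ in (0:ℝ)..ω, 1 / (Real.cosh (Real.sqrt (ξ^2 + Y) / (2 * kB * T)))^2) < 0 := by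
  -- measurability of the integrand for any T
  have hmeas : ∀ T : ℝ, AEStronglyMeasurable
      (fun ξ => Real.tanh (Real.sqrt (ξ^2 + Y) / (2 * kB * T)) / Real.sqrt (ξ^2 + Y))
      (volume.restrict (Set.uIoc (0:ℝ) ω)) := by
    intro T
    apply Measurable.aestronglyMeasurable
    apply Measurable.div
    · exact my_continuous_tanh.measurable.comp
        ((Real.continuous_sqrt.measurable.comp
          ((measurable_id.pow_const 2).add_const Y)).div_const _)
    · exact Real.continuous_sqrt.measurable.comp ((measurable_id.pow_const 2).add_const Y)
  have hcont2 : ∀ T : ℝ, Continuous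
      (fun ξ : ℝ => 1 / (Real.cosh (Real.sqrt (ξ^2 + Y) / (2 * kB * T)))^2) := by
    intro T
    apply continuous_const.div
    · exact (Real.continuous_cosh.comp
        ((Real.continuous_sqrt.comp ((continuous_pow 2).add continuous_const)).div_const _)).pow 2
    · intro ξ; positivity
  have key : ∀ T : ℝ, 0 < T →
      HasDerivAt
        (fun T : ℝ => (∫ ξ in (0:ℝ)..ω,
          Real.tanh (Real.sqrt (ξ^2 + Y) / (2 * kB * T)) / Real.sqrt (ξ^2 + Y))
          - 1 / (U₀ * N₀))
        (-(1 / (2 * kB * T^2)) *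
          ∫ ξ in (0:ℝ)..ω, 1 / (Real.cosh (Real.sqrt (ξ^2 + Y) / (2 * kB * T)))^2) T ∧
      -(1 / (2 * kB * T^2)) *
          (∫ ξ in (0:ℝ)..ω, 1 / (Real.cosh (Real.sqrt (ξ^2 + Y) / (2 * kB * T)))^2) < 0 := by
    intro T₀ hT₀
    have hneg : -(1 / (2 * kB * T₀^2)) *
        (∫ ξ in (0:ℝ)..ω, 1 / (Real.cosh (Real.sqrt (ξ^2 + Y) / (2 * kB * T₀)))^2) < 0 := by
      apply mul_neg_of_neg_of_pos
      · have : (0:ℝ) < 1 / (2 * kB * T₀^2) := by positivity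
        linarith
      · apply intervalIntegral.intervalIntegral_pos_of_pos
        · exact (hcont2 T₀).intervalIntegrable _ _
        · intro x; positivity
        · exact hω
    refine ⟨?_, hneg⟩
    have hεpos : (0:ℝ) < T₀ / 2 := by linarith
    have hmain := intervalIntegral.hasDerivAt_integral_of_dominated_loc_of_deriv_le
      (μ := volume) (a := (0:ℝ)) (b := ω) (x₀ := T₀)
      (F := fun T ξ => Real.tanh (Real.sqrt (ξ^2 + Y) / (2 * kB * T)) / Real.sqrt (ξ^2 + Y))
      (F' := fun T ξ => -(1 / (2 * kB * T^2)) *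
        (1 / (Real.cosh (Real.sqrt (ξ^2 + Y) / (2 * kB * T)))^2))
      (bound := fun _ => 2 / (kB * T₀^2))
      (ball_mem_nhds T₀ hεpos) (Filter.Eventually.of_forall fun T => hmeas T)
      ?hint ?hmeas' ?hbound (intervalIntegrable_const) ?hdiff
    · have heq : (∫ ξ in (0:ℝ)..ω, -(1 / (2 * kB * T₀^2)) *
          (1 / (Real.cosh (Real.sqrt (ξ^2 + Y) / (2 * kB * T₀)))^2))
          = -(1 / (2 * kB * T₀^2)) *
          ∫ ξ in (0:ℝ)..ω, 1 / (Real.cosh (Real.sqrt (ξ^2 + Y) / (2 * kB * T₀)))^2 :=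
        intervalIntegral.integral_const_mul _ _
      have := hmain.2
      rw [heq] at this
      exact this.sub_const _
    case hint =>
      apply IntervalIntegrable.mono_fun' (g := fun _ => 1 / (2 * kB * T₀))
        (intervalIntegrable_const) (hmeas T₀)
      apply Filter.Eventually.of_forall
      intro ξ
      set s := Real.sqrt (ξ^2 + Y) with hs
      have hs0 : 0 ≤ s := Real.sqrt_nonneg _
      have hu0 : 0 ≤ s / (2 * kB * T₀) := by positivity
      simp only [Real.norm_eq_abs]
      rw [abs_of_nonneg (div_nonneg (my_tanh_nonneg hu0) hs0)]
      rcases eq_or_lt_of_le hs0 with h0 | h0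
      · rw [← h0, div_zero]; positivity
      · calc Real.tanh (s / (2 * kB * T₀)) / s ≤ (s / (2 * kB * T₀)) / s := by
              gcongr; exact my_tanh_le hu0
          _ = 1 / (2 * kB * T₀) := by
              rw [div_right_comm, div_self h0.ne', one_div]
    case hmeas' =>
      exact ((continuous_const.mul (hcont2 T₀)).aestronglyMeasurable).restrict
    case hbound =>
      apply Filter.Eventually.of_forall
      intro ξ _ T hT
      have hTlb : T₀ / 2 < T := by
        rw [mem_ball, Real.dist_eq, abs_lt] at hT
        linarith [hT.1]
      have hTpos : 0 < T := lt_trans hεpos hTlb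
      set c := (Real.cosh (Real.sqrt (ξ^2 + Y) / (2 * kB * T)))^2 with hc
      have hc1 : (1:ℝ) ≤ c := by
        have := Real.one_le_cosh (Real.sqrt (ξ^2 + Y) / (2 * kB * T))
        nlinarith
      have hcpos : (0:ℝ) < c := by linarith
      rw [Real.norm_eq_abs, abs_mul, abs_neg, abs_of_pos (by positivity : (0:ℝ) < 1 / (2 * kB * T^2)),
        abs_of_pos (by positivity : (0:ℝ) < 1 / c)]
      calc 1 / (2 * kB * T^2) * (1 / c) ≤ 1 / (2 * kB * T^2) * 1 := by
            apply mul_le_mul_of_nonneg_left _ (by positivity)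
            rw [div_le_one hcpos]; exact hc1
        _ = 1 / (2 * kB * T^2) := mul_one _
        _ ≤ 2 / (kB * T₀^2) := by
            rw [div_le_div_iff₀ (by positivity) (by positivity)]
            nlinarith [mul_pos hkB (mul_pos (sub_pos.mpr hTlb)
              (show (0:ℝ) < T + T₀/2 by linarith))]
    case hdiff =>
      apply Filter.Eventually.of_forall
      intro ξ hξ T hT
      have hξpos : 0 < ξ := by
        rw [Set.uIoc_of_le hω.le] at hξ
        exact hξ.1
      have hTlb : T₀ / 2 < T := by
        rw [mem_ball, Real.dist_eq, abs_lt] at hT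
        linarith [hT.1]
      have hTpos : 0 < T := lt_trans hεpos hTlb
      set s := Real.sqrt (ξ^2 + Y) with hs
      have hspos : 0 < s := Real.sqrt_pos.mpr (by positivity)
      have harg : ∀ t : ℝ, s / (2 * kB * t) = s / (2 * kB) * t⁻¹ := by
        intro t; rw [← div_div, div_eq_mul_inv]
      simp only [harg]
      have h1 : HasDerivAt (fun t : ℝ => s / (2 * kB) * t⁻¹)
          (s / (2 * kB) * -((T^2)⁻¹)) T := (hasDerivAt_inv hTpos.ne').const_mul _
      have h2 := ((my_hasDerivAt_tanh (s / (2 * kB) * T⁻¹)).comp T h1).div_const s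
      refine HasDerivAt.congr_deriv h2 ?_
      have hcne : Real.cosh (s / (2 * kB) * T⁻¹) ≠ 0 := (Real.cosh_pos _).ne'
      field_simp
  constructor
  · apply strictAntiOn_of_deriv_neg (convex_Ioi 0)
    · intro T hT
      exact ((key T hT).1.continuousAt.continuousWithinAt)
    · intro T hT
      rw [interior_Ioi] at hT
      rw [(key T hT).1.deriv]
      exact (key T hT).2
  · exact key
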